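/- Let Γ = (V,E,s,r) be a finite quiver without self-loops (s(α) ≠ r(α) for every arrow α), with vertices v₁,…,v_n and arrows α₁,…,α_m, and let (K,f) be a Hilbert representation of Γ. Set H = K_{v₁} ⊕ ⋯ ⊕ K_{v_n} (Hilbert space direct sum), let E_i ⊆ H be the canonical copy of K_{v_i} for i = 1,…,n, and for j = 1,…,m let E_{n+j} ⊆ H be the graph of f_{α_j}, i.e., the set of vectors whose s(α_j)-component is z, whose r(α_j)-component is f_{α_j}(z), and whose other components are 0, for z ∈ K_{s(α_j)}. Then the map (T_v)_{v∈V} ↦ T_{v₁} ⊕ ⋯ ⊕ T_{v_n} is an algebra isomorphism from End(K,f) onto { S ∈ B(H) : S(E_i) ⊆ E_i for all i = 1,…,n+m }. -/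
import Mathlib


set_option synthInstance.maxHeartbeats 1000000
/-- The endomorphism algebra `End(K,f)` of a Hilbert representation `(K,f)` of a quiver
with vertex set `V`, arrow set `E` and source/range maps `s r : E → V`:
the subalgebra of `Π v, B(K v)` of families intertwining all arrow operators. -/
noncomputable def repEnd {V E : Type*} (s r : E → V) (K : V → Type*)
    [∀ v, NormedAddCommGroup (K v)] [∀ v, InnerProductSpace ℂ (K v)]
    (f : ∀ α : E, K (s α) →L[ℂ] K (r α)) :
    Subalgebra ℂ (∀ v, K v →L[ℂ] K v) where
  carrier := {T | ∀ α : E, (T (r α)) ∘L (f α) = (f α) ∘L (T (s α))}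
  mul_mem' := by
    intro T T' hT hT' α
    ext x
    have h1 : T' (r α) (f α x) = f α (T' (s α) x) := DFunLike.congr_fun (hT' α) x
    have h2 : T (r α) (f α (T' (s α) x)) = f α (T (s α) (T' (s α) x)) :=
      DFunLike.congr_fun (hT α) (T' (s α) x)
    simp [ContinuousLinearMap.mul_apply, h1, h2]
  one_mem' := by intro α; ext x; simp
  add_mem' := by
    intro T T' hT hT' α
    ext x
    have h1 : T (r α) (f α x) = f α (T (s α) x) := DFunLike.congr_fun (hT α) x
    have h2 : T' (r α) (f α x) = f α (T' (s α) x) := DFunLike.congr_fun (hT' α) x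
    simp [h1, h2]
  zero_mem' := by intro α; ext x; simp
  algebraMap_mem' := by
    intro c α
    ext x
    simp [Algebra.algebraMap_eq_smul_one]


/-- The endomorphism algebra of a system of subspaces `(H; (E_i)_{i ∈ ι})`:
the subalgebra of `B(H)` of operators leaving every subspace `E i` invariant. -/
noncomputable def invAlg {H : Type*} [NormedAddCommGroup H] [InnerProductSpace ℂ H]
    {ι : Type*} (Esub : ι → Submodule ℂ H) : Subalgebra ℂ (H →L[ℂ] H) where
  carrier := {S | ∀ i : ι, ∀ x ∈ Esub i, S x ∈ Esub i}
  mul_mem' := by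
    intro S S' hS hS' i x hx
    rw [ContinuousLinearMap.mul_apply]
    exact hS i _ (hS' i x hx)
  one_mem' := by intro i x hx; simpa using hx
  add_mem' := by
    intro S S' hS hS' i x hx
    rw [ContinuousLinearMap.add_apply]
    exact (Esub i).add_mem (hS i x hx) (hS' i x hx)
  zero_mem' := by intro i x hx; simp
  algebraMap_mem' := by
    intro c i x hx
    rw [Algebra.algebraMap_eq_smul_one]
    rw [ContinuousLinearMap.smul_apply, ContinuousLinearMap.one_apply]
    exact (Esub i).smul_mem c hx

/-- The subspace of the direct sum `H = ⊕_v K v` corresponding to a vertex `v`: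
vectors supported at `v`. -/
def vertexSub {V : Type*} [Fintype V] (K : V → Type*)
    [∀ v, NormedAddCommGroup (K v)] [∀ v, InnerProductSpace ℂ (K v)] (v : V) :
    Submodule ℂ (PiLp 2 K) where
  carrier := {x | ∀ u : V, u ≠ v → x u = 0}
  add_mem' := by
    intro a b ha hb u hu
    rw [PiLp.add_apply, ha u hu, hb u hu, add_zero]
  zero_mem' := by intro u _; rw [PiLp.zero_apply]
  smul_mem' := by
    intro c a ha u hu
    rw [PiLp.smul_apply, ha u hu, smul_zero]

/-- The subspace of the direct sum `H = ⊕_v K v` corresponding to an arrow `α`: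
the graph of `f α`, i.e. vectors whose `s α`-component is `z`, whose `r α`-component is
`f α z`, and whose other components vanish. -/
def arrowSub {V E : Type*} [Fintype V] (s r : E → V) (K : V → Type*)
    [∀ v, NormedAddCommGroup (K v)] [∀ v, InnerProductSpace ℂ (K v)]
    (f : ∀ α : E, K (s α) →L[ℂ] K (r α)) (α : E) :
    Submodule ℂ (PiLp 2 K) where
  carrier := {x | (∀ u : V, u ≠ s α → u ≠ r α → x u = 0) ∧ x (r α) = f α (x (s α))}
  add_mem' := by
    intro a b ha hb
    refine ⟨fun u h1 h2 => ?_, ?_⟩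
    · rw [PiLp.add_apply, ha.1 u h1 h2, hb.1 u h1 h2, add_zero]
    · rw [PiLp.add_apply, PiLp.add_apply, ha.2, hb.2, map_add]
  zero_mem' := by
    refine ⟨fun u _ _ => ?_, ?_⟩
    · rw [PiLp.zero_apply]
    · rw [PiLp.zero_apply, PiLp.zero_apply, map_zero]
  smul_mem' := by
    intro c a ha
    refine ⟨fun u h1 h2 => ?_, ?_⟩
    · rw [PiLp.smul_apply, ha.1 u h1 h2, smul_zero]
    · rw [PiLp.smul_apply, PiLp.smul_apply, ha.2, map_smul]

set_option linter.unusedSectionVars false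
section Aux

variable {V : Type*} [Fintype V] {K : V → Type*}
  [∀ v, NormedAddCommGroup (K v)] [∀ v, InnerProductSpace ℂ (K v)]

/-- The diagonal operator `⊕_v T v` on `⊕_v K v`. -/
noncomputable def diagCLM (T : ∀ v, K v →L[ℂ] K v) : PiLp 2 K →L[ℂ] PiLp 2 K :=
  ((PiLp.continuousLinearEquiv 2 ℂ K).symm.toContinuousLinearMap).comp
    ((ContinuousLinearMap.pi fun v => (T v).comp (ContinuousLinearMap.proj v)).comp
      (PiLp.continuousLinearEquiv 2 ℂ K).toContinuousLinearMap)

@[simp] lemma diagCLM_apply (T : ∀ v, K v →L[ℂ] K v) (x : PiLp 2 K) (v : V) :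
    diagCLM T x v = T v (x v) := rfl

/-- Inclusion of `K v` as the `v`-th summand of `⊕_u K u`. -/
noncomputable def singleCLM [DecidableEq V] (v : V) : K v →L[ℂ] PiLp 2 K :=
  (PiLp.continuousLinearEquiv 2 ℂ K).symm.toContinuousLinearMap.comp
    ⟨LinearMap.single ℂ K v, continuous_single v⟩

lemma singleCLM_apply [DecidableEq V] (v : V) (z : K v) (u : V) :
    singleCLM v z u = Pi.single v z u := rfl

lemma piLp_eq_of_apply {x y : PiLp 2 K} (h : ∀ v, x v = y v) : x = y :=
  (PiLp.continuousLinearEquiv 2 ℂ K).injective (funext h)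

lemma piLp_sum_apply {ι : Type*} (s : Finset ι) (g : ι → PiLp 2 K) (v : V) :
    (∑ i ∈ s, g i) v = ∑ i ∈ s, g i v := by
  exact map_sum (PiLp.proj (𝕜 := ℂ) (p := 2) (β := K) v) g s

lemma sum_singleCLM [DecidableEq V] (x : PiLp 2 K) :
    ∑ v, singleCLM v (x v) = x := by
  refine piLp_eq_of_apply fun u => ?_
  rw [piLp_sum_apply]
  simp [singleCLM_apply]

end Aux

/-- **Reduction of Hilbert representations of quivers without self-loops to systems of
subspaces.**  For a finite quiver `Γ` without self-loops, with `n` vertices and `m`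
arrows, and a Hilbert representation `(K,f)`, form `H = ⊕_v K v` with the `n + m`
subspaces given by the canonical copies of the `K v` and the graphs of the `f α`.  Then
`(T_v)_v ↦ ⊕_v T_v` is an algebra isomorphism from `End(K,f)` onto the algebra of
bounded operators on `H` leaving all `n + m` subspaces invariant. -/
theorem stmt_17 {V E : Type*} [Fintype V] [Fintype E] (s r : E → V)
    (hloop : ∀ α : E, s α ≠ r α)
    (K : V → Type*) [∀ v, NormedAddCommGroup (K v)] [∀ v, InnerProductSpace ℂ (K v)]
    [∀ v, CompleteSpace (K v)]
    (f : ∀ α : E, K (s α) →L[ℂ] K (r α)) :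
    ∃ Φ : repEnd s r K f ≃ₐ[ℂ]
        invAlg (Sum.elim (fun v : V => vertexSub K v) (fun α : E => arrowSub s r K f α)),
      ∀ (T : repEnd s r K f) (x : PiLp 2 K) (v : V),
        ((Φ T : PiLp 2 K →L[ℂ] PiLp 2 K) x) v = (T : ∀ v, K v →L[ℂ] K v) v (x v) := by
  classical
  set Esub := Sum.elim (fun v : V => vertexSub K v) (fun α : E => arrowSub s r K f α)
    with hEsub
  -- the diagonal operator of an endomorphism leaves all subspaces invariant
  have hmem : ∀ T : repEnd s r K f,
      diagCLM (K := K) (T : ∀ v, K v →L[ℂ] K v) ∈ invAlg Esub := by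
    rintro ⟨T, hT⟩ (v | α) x hx
    · intro u hu
      show T u (x u) = 0
      rw [hx u hu, map_zero]
    · obtain ⟨hx1, hx2⟩ := hx
      refine ⟨fun u h1 h2 => ?_, ?_⟩
      · show T u (x u) = 0
        rw [hx1 u h1 h2, map_zero]
      · show T (r α) (x (r α)) = f α (T (s α) (x (s α)))
        rw [hx2]
        exact DFunLike.congr_fun (hT α) (x (s α))
  -- the algebra homomorphism
  let Φ0 : repEnd s r K f →ₐ[ℂ] invAlg Esub :=
    { toFun := fun T => ⟨diagCLM (K := K) (T : ∀ v, K v →L[ℂ] K v), hmem T⟩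
      map_one' := by
        apply Subtype.ext
        refine ContinuousLinearMap.ext fun x => piLp_eq_of_apply fun v => ?_
        simp
      map_mul' := fun T T' => by
        apply Subtype.ext
        refine ContinuousLinearMap.ext fun x => piLp_eq_of_apply fun v => ?_
        simp [ContinuousLinearMap.mul_apply, Pi.mul_apply]
      map_zero' := by
        apply Subtype.ext
        refine ContinuousLinearMap.ext fun x => piLp_eq_of_apply fun v => ?_
        simp
      map_add' := fun T T' => by
        apply Subtype.ext
        refine ContinuousLinearMap.ext fun x => piLp_eq_of_apply fun v => ?_
        simp
      commutes' := fun c => by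
        apply Subtype.ext
        refine ContinuousLinearMap.ext fun x => piLp_eq_of_apply fun v => ?_
        simp [Algebra.algebraMap_eq_smul_one] }
  have hinj : Function.Injective Φ0 := by
    intro T T' h
    have h' : diagCLM (K := K) (T : ∀ v, K v →L[ℂ] K v)
        = diagCLM (K := K) (T' : ∀ v, K v →L[ℂ] K v) := congrArg Subtype.val h
    apply Subtype.ext
    funext v
    refine ContinuousLinearMap.ext fun z => ?_
    have := congrFun (congrArg (fun S : PiLp 2 K →L[ℂ] PiLp 2 K =>
      (S (singleCLM v z) : ∀ u, K u)) h') v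
    simpa [singleCLM_apply, Pi.single_eq_same] using this
  have hsurj : Function.Surjective Φ0 := by
    rintro ⟨S, hS⟩
    set T : ∀ v, K v →L[ℂ] K v :=
      fun v => (PiLp.proj (𝕜 := ℂ) (p := 2) (β := K) v).comp (S.comp (singleCLM v)) with hTdef
    have hTS_single : ∀ (v : V) (z : K v), S (singleCLM v z) = singleCLM v (T v z) := by
      intro v z
      have hmem1 : singleCLM v z ∈ vertexSub K v := by
        intro u hu
        rw [singleCLM_apply, Pi.single_eq_of_ne hu]
      have h2 : S (singleCLM v z) ∈ vertexSub K v := hS (Sum.inl v) _ hmem1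
      refine piLp_eq_of_apply fun u => ?_
      by_cases hu : u = v
      · subst hu
        rw [singleCLM_apply, Pi.single_eq_same]
        rfl
      · rw [h2 u hu, singleCLM_apply, Pi.single_eq_of_ne hu]
    have hTmem : T ∈ repEnd s r K f := by
      intro α
      refine ContinuousLinearMap.ext fun z => ?_
      set g : PiLp 2 K := singleCLM (s α) z + singleCLM (r α) (f α z) with hgdef
      have hg : g ∈ arrowSub s r K f α := by
        refine ⟨fun u h1 h2 => ?_, ?_⟩
        · rw [hgdef, PiLp.add_apply, singleCLM_apply, singleCLM_apply,
            Pi.single_eq_of_ne h1, Pi.single_eq_of_ne h2, add_zero]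
        · rw [hgdef, PiLp.add_apply, PiLp.add_apply, singleCLM_apply, singleCLM_apply,
            singleCLM_apply, singleCLM_apply, Pi.single_eq_of_ne (Ne.symm (hloop α)),
            Pi.single_eq_same, Pi.single_eq_same, Pi.single_eq_of_ne (hloop α),
            zero_add, add_zero]
      have hSg : S g ∈ arrowSub s r K f α := hS (Sum.inr α) g hg
      have hSg_eq : S g = singleCLM (s α) (T (s α) z) + singleCLM (r α) (T (r α) (f α z)) := by
        rw [hgdef, map_add, hTS_single, hTS_single]
      have h2 := hSg.2
      rw [hSg_eq, PiLp.add_apply, PiLp.add_apply, singleCLM_apply, singleCLM_apply,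
        singleCLM_apply, singleCLM_apply, Pi.single_eq_of_ne (Ne.symm (hloop α)),
        Pi.single_eq_same, Pi.single_eq_same, Pi.single_eq_of_ne (hloop α),
        zero_add, add_zero] at h2
      exact h2
    refine ⟨⟨T, hTmem⟩, ?_⟩
    apply Subtype.ext
    show diagCLM (K := K) T = S
    refine ContinuousLinearMap.ext fun x => ?_
    conv_rhs => rw [← sum_singleCLM x]
    rw [map_sum]
    refine piLp_eq_of_apply fun u => ?_
    rw [piLp_sum_apply]
    simp only [hTS_single, singleCLM_apply, diagCLM_apply]
    simp
  exact ⟨AlgEquiv.ofBijective Φ0 ⟨hinj, hsurj⟩, fun T x v => rfl⟩
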